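/- Let k ≥ 1, and let P(X) = 3X² - 2(a+b+c)X + (ab+bc+ca) for distinct complex numbers a, b, c. Suppose f is entire, z₀ ∈ ℂ, f^{(k)}(z₀) = 0, f - f(z₀) has a zero of exact order n at z₀ with n > k ≥ 2, P(f^{(k)}(z₀)) ≠ 0, and P(f(z₀)) ≠ 0. Then the function P(f^{(k)})·f^{(k+1)} has a zero of exact order n-k-1 at z₀, while the function P(f)·f' has a zero of order at least n-1 at z₀; in particular these two orders differ, so P(f^{(k)})·f^{(k+1)} ≠ A·P(f)·f' for any nonzero constant A in any neighborhood of z₀ when n-k-1 < n-1. -/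

import Mathlib

open Finset

lemma leibniz_iteratedDeriv (u v : ℂ → ℂ)
    (hu : ∀ m, Differentiable ℂ (iteratedDeriv m u))
    (hv : ∀ m, Differentiable ℂ (iteratedDeriv m v)) (m : ℕ) :
    iteratedDeriv m (fun z => u z * v z) = fun z =>
      ∑ j ∈ Finset.range (m + 1),
        (m.choose j : ℂ) * iteratedDeriv j u z * iteratedDeriv (m - j) v z := by
  induction m with
  | zero => simp
  | succ m ih =>
    rw [iteratedDeriv_succ, ih]
    funext z
    rw [deriv_fun_sum (fun j hj => by
      exact (((hu j).differentiableAt.const_mul _).mul (hv (m - j)).differentiableAt))]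
    have key : ∀ j ∈ Finset.range (m + 1),
        deriv (fun z => (m.choose j : ℂ) * iteratedDeriv j u z * iteratedDeriv (m - j) v z) z
          = (m.choose j : ℂ) * iteratedDeriv (j+1) u z * iteratedDeriv (m - j) v z
            + (m.choose j : ℂ) * iteratedDeriv j u z * iteratedDeriv (m - j + 1) v z := by
      intro j hj
      rw [deriv_fun_mul (((hu j).differentiableAt).const_mul _) (hv (m-j)).differentiableAt,
        deriv_const_mul _ (hu j).differentiableAt, ← iteratedDeriv_succ, ← iteratedDeriv_succ]
    rw [Finset.sum_congr rfl key, Finset.sum_add_distrib]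
    have h1 : ∑ j ∈ Finset.range (m + 1),
        (m.choose j : ℂ) * iteratedDeriv (j+1) u z * iteratedDeriv (m - j) v z
        = ∑ j ∈ Finset.Ico 1 (m + 2),
        (m.choose (j-1) : ℂ) * iteratedDeriv j u z * iteratedDeriv (m + 1 - j) v z := by
      rw [Finset.sum_Ico_eq_sum_range]
      have : m + 2 - 1 = m + 1 := by omega
      rw [this]
      apply Finset.sum_congr rfl
      intro j hj
      simp only [Finset.mem_range] at hj
      rw [show 1 + j - 1 = j from by omega, show 1 + j = j + 1 from by omega, show m + 1 - (j + 1) = m - j from by omega]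
    have h2 : ∀ j ∈ Finset.range (m+1), (m.choose j : ℂ) * iteratedDeriv j u z * iteratedDeriv (m - j + 1) v z = (m.choose j : ℂ) * iteratedDeriv j u z * iteratedDeriv (m + 1 - j) v z := by
      intro j hj
      simp only [Finset.mem_range] at hj
      have e : m - j + 1 = m + 1 - j := by omega
      rw [e]
    rw [h1, Finset.sum_congr rfl h2]
    have hL : Finset.range (m+2) = insert 0 (Finset.Ico 1 (m+2)) := by
      ext x; simp [Finset.mem_Ico]; omega
    have hR : Finset.Ico 1 (m+2) = insert (m+1) (Finset.Ico 1 (m+1)) := by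
      ext x; simp [Finset.mem_Ico]; omega
    have hR2 : Finset.range (m+1) = insert 0 (Finset.Ico 1 (m+1)) := by
      ext x; simp [Finset.mem_Ico]; omega
    have hcomb : (∑ j ∈ Finset.Ico 1 (m+1), (m.choose (j-1) : ℂ) * iteratedDeriv j u z * iteratedDeriv (m + 1 - j) v z)
        + ∑ j ∈ Finset.Ico 1 (m+1), (m.choose j : ℂ) * iteratedDeriv j u z * iteratedDeriv (m + 1 - j) v z
        = ∑ j ∈ Finset.Ico 1 (m+1), ((m+1).choose j : ℂ) * iteratedDeriv j u z * iteratedDeriv (m + 1 - j) v z := by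
      rw [← Finset.sum_add_distrib]
      apply Finset.sum_congr rfl
      intro j hj
      simp only [Finset.mem_Ico] at hj
      have : (m+1).choose j = m.choose (j-1) + m.choose j := by
        rcases Nat.exists_eq_add_of_le hj.1 with ⟨l, rfl⟩
        simp [Nat.succ_sub_one, Nat.choose_succ_succ, Nat.add_comm]
      rw [this]
      push_cast
      ring
    rw [hR, Finset.sum_insert (by simp), hR2, Finset.sum_insert (by simp), hL,
      Finset.sum_insert (by simp), hR, Finset.sum_insert (by simp)]
    simp only [Nat.add_sub_cancel, Nat.sub_self, Nat.sub_zero, Nat.choose_self,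
      Nat.choose_zero_right, Nat.cast_one]
    linear_combination hcomb

lemma entire_iteratedDeriv (g : ℂ → ℂ) (hg : Differentiable ℂ g) (m : ℕ) :
    Differentiable ℂ (iteratedDeriv m g) :=
  hg.contDiff.differentiable_iteratedDeriv m (by
    exact_mod_cast lt_of_le_of_lt (le_refl _) (WithTop.coe_lt_top (m : ℕ∞)))

lemma iteratedDeriv_shift (g : ℂ → ℂ) (k j : ℕ) :
    iteratedDeriv j (iteratedDeriv k g) = iteratedDeriv (k + j) g := by
  induction j with
  | zero => simp
  | succ j ih => rw [iteratedDeriv_succ, ih, ← iteratedDeriv_succ]; rfl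

theorem stmt14 (a b c : ℂ) (hab : a ≠ b) (hbc : b ≠ c) (hca : c ≠ a)
    (P : ℂ → ℂ)
    (hP : ∀ x, P x = 3 * x ^ 2 - 2 * (a + b + c) * x + (a * b + b * c + c * a))
    (f : ℂ → ℂ) (hf : Differentiable ℂ f) (z₀ : ℂ) (n k : ℕ)
    (hk : 2 ≤ k) (hkn : k < n)
    (hfk0 : iteratedDeriv k f z₀ = 0)
    (hzero : ∀ i, 1 ≤ i → i < n → iteratedDeriv i f z₀ = 0)
    (hne : iteratedDeriv n f z₀ ≠ 0)
    (hPfk : P (iteratedDeriv k f z₀) ≠ 0) (hPf : P (f z₀) ≠ 0) :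
    ((∀ i, i < n - k - 1 →
        iteratedDeriv i (fun z => P (iteratedDeriv k f z) * iteratedDeriv (k + 1) f z) z₀ = 0) ∧
      iteratedDeriv (n - k - 1)
        (fun z => P (iteratedDeriv k f z) * iteratedDeriv (k + 1) f z) z₀ ≠ 0) ∧
    (∀ i, i < n - 1 → iteratedDeriv i (fun z => P (f z) * deriv f z) z₀ = 0) ∧
    (∀ A : ℂ, A ≠ 0 →
      ¬ (∀ᶠ z in nhds z₀,
        P (iteratedDeriv k f z) * iteratedDeriv (k + 1) f z = A * (P (f z) * deriv f z))) := by
  have hD : ∀ m, Differentiable ℂ (iteratedDeriv m f) := entire_iteratedDeriv f hf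
  -- u = P ∘ f^(k)
  have hu0 : Differentiable ℂ (fun z => P (iteratedDeriv k f z)) := by
    simp only [hP]
    exact ((((hD k).pow 2).const_mul 3).sub ((hD k).const_mul _)).add_const _
  have hu : ∀ m, Differentiable ℂ (iteratedDeriv m (fun z => P (iteratedDeriv k f z))) :=
    entire_iteratedDeriv _ hu0
  have hv : ∀ m, Differentiable ℂ (iteratedDeriv m (iteratedDeriv (k + 1) f)) := fun m => by
    rw [iteratedDeriv_shift]; exact hD _
  have hu20 : Differentiable ℂ (fun z => P (f z)) := by
    simp only [hP]
    exact (((hf.pow 2).const_mul 3).sub (hf.const_mul _)).add_const _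
  have hu2 : ∀ m, Differentiable ℂ (iteratedDeriv m (fun z => P (f z))) :=
    entire_iteratedDeriv _ hu20
  have hv2 : ∀ m, Differentiable ℂ (iteratedDeriv m (deriv f)) := fun m => by
    have : deriv f = iteratedDeriv 1 f := by rw [iteratedDeriv_one]
    rw [this, iteratedDeriv_shift]; exact hD _
  -- Leibniz expansions
  have hLeib1 : ∀ m (z : ℂ), iteratedDeriv m (fun z => P (iteratedDeriv k f z) * iteratedDeriv (k + 1) f z) z = ∑ j ∈ Finset.range (m + 1), (m.choose j : ℂ) * iteratedDeriv j (fun z => P (iteratedDeriv k f z)) z * iteratedDeriv (m - j) (iteratedDeriv (k + 1) f) z :=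
    fun m z => congrFun (leibniz_iteratedDeriv _ _ hu hv m) z
  have hLeib2 : ∀ m (z : ℂ), iteratedDeriv m (fun z => P (f z) * deriv f z) z = ∑ j ∈ Finset.range (m + 1), (m.choose j : ℂ) * iteratedDeriv j (fun z => P (f z)) z * iteratedDeriv (m - j) (deriv f) z :=
    fun m z => congrFun (leibniz_iteratedDeriv _ _ hu2 hv2 m) z
  -- derivatives of v at z₀
  have hvz : ∀ j, k + 1 + j < n → iteratedDeriv j (iteratedDeriv (k + 1) f) z₀ = 0 := by
    intro j hj
    rw [iteratedDeriv_shift]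
    exact hzero _ (by omega) hj
  -- second product: all iterated derivs of order < n-1 vanish
  have part2 : ∀ i, i < n - 1 → iteratedDeriv i (fun z => P (f z) * deriv f z) z₀ = 0 := by
    intro i hi
    rw [hLeib2 i z₀]
    apply Finset.sum_eq_zero
    intro j hj
    simp only [Finset.mem_range] at hj
    have : iteratedDeriv (i - j) (deriv f) z₀ = 0 := by
      have hdf : deriv f = iteratedDeriv 1 f := by rw [iteratedDeriv_one]
      rw [hdf, iteratedDeriv_shift]
      exact hzero _ (by omega) (by omega)
    rw [this, mul_zero]
  -- first product: vanishing below n-k-1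
  have part1a : ∀ i, i < n - k - 1 →
      iteratedDeriv i (fun z => P (iteratedDeriv k f z) * iteratedDeriv (k + 1) f z) z₀ = 0 := by
    intro i hi
    rw [hLeib1 i z₀]
    apply Finset.sum_eq_zero
    intro j hj
    simp only [Finset.mem_range] at hj
    rw [hvz (i - j) (by omega), mul_zero]
  -- first product: nonvanishing at n-k-1
  have part1b : iteratedDeriv (n - k - 1)
      (fun z => P (iteratedDeriv k f z) * iteratedDeriv (k + 1) f z) z₀ ≠ 0 := by
    rw [hLeib1 (n - k - 1) z₀]
    have hs : ∑ j ∈ Finset.range (n - k - 1 + 1),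
        ((n - k - 1).choose j : ℂ) * iteratedDeriv j (fun z => P (iteratedDeriv k f z)) z₀ *
          iteratedDeriv (n - k - 1 - j) (iteratedDeriv (k + 1) f) z₀
        = ((n - k - 1).choose 0 : ℂ) * iteratedDeriv 0 (fun z => P (iteratedDeriv k f z)) z₀ *
          iteratedDeriv (n - k - 1 - 0) (iteratedDeriv (k + 1) f) z₀ := by
      apply Finset.sum_eq_single_of_mem 0 (by simp)
      intro j hj hj0
      simp only [Finset.mem_range] at hj
      rw [hvz (n - k - 1 - j) (by omega), mul_zero]
    rw [hs]
    simp only [Nat.choose_zero_right, Nat.cast_one, one_mul, iteratedDeriv_zero, Nat.sub_zero]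
    rw [iteratedDeriv_shift]
    have hidx : k + 1 + (n - k - 1) = n := by omega
    rw [hidx]
    exact mul_ne_zero hPfk hne
  refine ⟨⟨part1a, part1b⟩, part2, ?_⟩
  intro A hA hev
  apply part1b
  have heq : iteratedDeriv (n - k - 1)
      (fun z => P (iteratedDeriv k f z) * iteratedDeriv (k + 1) f z) z₀
      = iteratedDeriv (n - k - 1) (fun z => A * (P (f z) * deriv f z)) z₀ :=
    Filter.EventuallyEq.iteratedDeriv_eq _ hev
  have hprod : ContDiffOn ℂ (n - k - 1 : ℕ) (fun z => P (f z) * deriv f z) Set.univ := by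
    have hdf : Differentiable ℂ (deriv f) := by
      have := hD 1
      rwa [iteratedDeriv_one] at this
    have : Differentiable ℂ (fun z => P (f z) * deriv f z) := hu20.mul hdf
    exact this.contDiff.contDiffOn
  have hcm : iteratedDeriv (n - k - 1) (fun z => A * (P (f z) * deriv f z)) z₀
      = A * iteratedDeriv (n - k - 1) (fun z => P (f z) * deriv f z) z₀ := by
    rw [← iteratedDerivWithin_univ, ← iteratedDerivWithin_univ]
    exact iteratedDerivWithin_const_mul (Set.mem_univ z₀) uniqueDiffOn_univ A (hprod z₀ (Set.mem_univ z₀))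
  rw [heq, hcm, part2 (n - k - 1) (by omega), mul_zero]
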